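/- arXiv:0810.2379 — 7 statements merged into one kernel-verified Lean document; each statement's English description precedes it below -/
import Mathlib

section
/- Let k be a field and let X be a variety over k. Then X is plain if and only if for every point x ∈ X there exist n ∈ ℕ and a prime ideal p of the polynomial ring k[x₁,…,xₙ] such that the stalk O_{X,x} of the structure sheaf of X at x is isomorphic, as a k-algebra, to the localization of k[x₁,…,xₙ] at p. -/
open AlgebraicGeometry CategoryTheory

/-- Affine `n`-space over `k`, as a scheme. -/
noncomputable def AffSp (k : Type) [Field k] (n : ℕ) : Scheme :=
  Spec (CommRingCat.of (MvPolynomial (Fin n) k))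

/-- The structure morphism of affine `n`-space over `k`. -/
noncomputable def AffSp.toSpecK (k : Type) [Field k] (n : ℕ) :
    AffSp k n ⟶ Spec (CommRingCat.of k) :=
  Spec.map (CommRingCat.ofHom (algebraMap k (MvPolynomial (Fin n) k)))

/-- A scheme `X` over `k` is *plain* if every point has an open neighborhood
isomorphic, as a `k`-scheme, to an open subscheme of some affine space `𝔸ⁿ_k`. -/
def IsPlainOver (k : Type) [Field k] (X : Scheme)
    (f : X ⟶ Spec (CommRingCat.of k)) : Prop :=
  ∀ x : X, ∃ (U : X.Opens) (_ : x ∈ U) (n : ℕ) (V : (AffSp k n).Opens)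
    (e : (U : Scheme) ≅ (V : Scheme)),
    e.hom ≫ Scheme.Opens.ι V ≫ AffSp.toSpecK k n = Scheme.Opens.ι U ≫ f

/-- The `k`-algebra structure on the stalk `O_{X,x}` of a `k`-scheme `X`. -/
noncomputable def stalkAlg (k : Type) [Field k] (X : Scheme)
    (f : X ⟶ Spec (CommRingCat.of k)) (x : X) :
    Algebra k (X.presheaf.stalk x) :=
  RingHom.toAlgebra
    ((Scheme.ΓSpecIso (CommRingCat.of k)).inv ≫ f.appTop ≫ X.presheaf.germ ⊤ x trivial).hom

/-- The stalk isomorphism of `Spec R`, in the old direction. -/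
noncomputable def stalkIso' (R : Type) [CommRing R] (x : PrimeSpectrum R) :
    (Spec (CommRingCat.of R)).presheaf.stalk x ≅ CommRingCat.of (Localization.AtPrime x.asIdeal) :=
  Spec.stalkIso (CommRingCat.of R) x

/-- The structure map of a scheme over `Spec R`, on stalks. -/
noncomputable def aMap {R : CommRingCat} {T : Scheme} (h : T ⟶ Spec R) (t : T) :
    R ⟶ T.presheaf.stalk t :=
  (Scheme.ΓSpecIso R).inv ≫ h.appTop ≫ T.presheaf.germ ⊤ t trivial

lemma aMap_natural {R : CommRingCat} {T T' : Scheme} (w : T ⟶ T') (h : T' ⟶ Spec R) (t : T) :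
    aMap (w ≫ h) t = aMap h (w.base t) ≫ w.stalkMap t := by
  simp only [aMap, Scheme.Hom.comp_appTop, Category.assoc, Scheme.Hom.germ_stalkMap]
  exact congrArg (fun g => (Scheme.ΓSpecIso R).inv ≫ h.appTop ≫ g)
    (Scheme.Hom.germ_stalkMap w ⊤ t trivial).symm

lemma fromSpecStalk_comp_eq {R : CommRingCat} {T : Scheme} (h : T ⟶ Spec R) (t : T) :
    T.fromSpecStalk t ≫ h = Spec.map (aMap h t) := by
  rw [← Scheme.SpecMap_stalkMap_fromSpecStalk h (x := t), Scheme.Spec_fromSpecStalk,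
    ← Spec.map_comp]
  congr 1
  rw [Category.assoc]
  exact congrArg (fun g => (Scheme.ΓSpecIso R).inv ≫ g) (Scheme.Hom.germ_stalkMap h ⊤ t trivial)

lemma aMap_Spec_map {R R' : CommRingCat} (φ : R ⟶ R') (y : Spec R') :
    aMap (Spec.map φ) y = φ ≫ StructureSheaf.toStalk R' y := by
  rw [aMap, ← Scheme.ΓSpecIso_inv_naturality_assoc, Scheme.ΓSpecIso_inv]
  rfl

lemma aMap_toSpecK (k : Type) [Field k] (n : ℕ) (p : Ideal (MvPolynomial (Fin n) k))
    (hp : p.IsPrime) :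
    aMap (AffSp.toSpecK k n) (⟨p, hp⟩ : PrimeSpectrum (MvPolynomial (Fin n) k)) ≫
        (stalkIso' _ (⟨p, hp⟩ : PrimeSpectrum (MvPolynomial (Fin n) k))).hom =
      CommRingCat.ofHom (algebraMap k (Localization.AtPrime p)) := by
  have hT : StructureSheaf.toStalk (MvPolynomial (Fin n) k) ⟨p, hp⟩ ≫
      (stalkIso' (MvPolynomial (Fin n) k) ⟨p, hp⟩).hom = CommRingCat.ofHom (algebraMap _ _) := by
    refine (Iso.eq_comp_inv _).mp ?_
    exact (Spec.algebraMap_stalkIso_inv _).symm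
  rw [AffSp.toSpecK]; erw [aMap_Spec_map, Category.assoc, hT]
  ext a
  exact (IsScalarTower.algebraMap_apply k (MvPolynomial (Fin n) k) _ a).symm

instance AffSp.instLocallyOfFiniteType (k : Type) [Field k] (n : ℕ) :
    LocallyOfFiniteType (AffSp.toSpecK k n) := by
  refine (HasRingHomProperty.Spec_iff (P := @LocallyOfFiniteType)
    (φ := CommRingCat.ofHom (algebraMap k (MvPolynomial (Fin n) k)))).mpr ?_
  show RingHom.FiniteType (algebraMap k (MvPolynomial (Fin n) k))
  have h : Algebra.FiniteType k (MvPolynomial (Fin n) k) := inferInstance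
  delta RingHom.FiniteType
  rw [Algebra.algebra_ext ((algebraMap k (MvPolynomial (Fin n) k)).toAlgebra)
    (inferInstance : Algebra k (MvPolynomial (Fin n) k)) (fun _ => rfl)]
  exact h

instance AffSp.instIsIntegral (k : Type) [Field k] (n : ℕ) : IsIntegral (AffSp k n) := by
  have : IsDomain (CommRingCat.of (MvPolynomial (Fin n) k)) :=
    inferInstanceAs (IsDomain (MvPolynomial (Fin n) k))
  rw [AffSp]
  infer_instance


lemma endgame {X Y S W W' Z Z' : Scheme} (f : X ⟶ S) (sY : Y ⟶ S)
    (ι₁ : Z' ⟶ X) (ι₂ : Z ⟶ Y) [IsOpenImmersion ι₁] [IsOpenImmersion ι₂]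
    (u : W ⟶ Z) (v : Z ⟶ X) (u' : W' ⟶ Z') (v' : Z' ⟶ Y)
    (cW : W ⟶ Z') (cW' : W' ⟶ Z) [IsOpenImmersion cW] [IsOpenImmersion cW']
    (h1 : u ≫ v = cW ≫ ι₁) (h2 : u' ≫ v' = cW' ≫ ι₂)
    (h3 : cW ≫ v' = u ≫ ι₂) (h4 : cW' ≫ v = u' ≫ ι₁)
    (h5 : v' ≫ sY = ι₁ ≫ f)
    (aW : W) (bW : W') (hab : (u ≫ ι₂).base aW = (cW' ≫ ι₂).base bW) :
    ∃ (U₀ : X.Opens) (_ : (cW ≫ ι₁).base aW ∈ U₀) (V₀ : Y.Opens)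
      (e : U₀.toScheme ≅ V₀.toScheme), e.hom ≫ V₀.ι ≫ sY = U₀.ι ≫ f := by
  let qY : W ⟶ Y := u ≫ ι₂
  let rX : W' ⟶ X := u' ≫ ι₁
  let α : W ⟶ X := cW ≫ ι₁
  let β₂ : W' ⟶ Y := cW' ≫ ι₂
  let A₀ : W.Opens := qY ⁻¹ᵁ β₂.opensRange
  have hrt : Set.range (A₀.ι ≫ qY).base ⊆ Set.range β₂.base := by
    rintro _ ⟨a, rfl⟩
    rw [Scheme.Hom.comp_apply]
    exact a.2
  let t : A₀.toScheme ⟶ W' := IsOpenImmersion.lift β₂ (A₀.ι ≫ qY) hrt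
  have ht : t ≫ β₂ = A₀.ι ≫ qY := IsOpenImmersion.lift_fac _ _ hrt
  have htc : t ≫ cW' = A₀.ι ≫ u := by
    rw [← cancel_mono ι₂]
    show t ≫ β₂ = _
    rw [ht]
    show A₀.ι ≫ u ≫ ι₂ = _
    rw [Category.assoc]
  have T1 : t ≫ rX = A₀.ι ≫ α := by
    show t ≫ u' ≫ ι₁ = _
    rw [← h4, ← Category.assoc, htc, Category.assoc, h1]
  let B₀ : W'.Opens := rX ⁻¹ᵁ α.opensRange
  have hrs : Set.range (B₀.ι ≫ rX).base ⊆ Set.range α.base := by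
    rintro _ ⟨b, rfl⟩
    rw [Scheme.Hom.comp_apply]
    exact b.2
  let s : B₀.toScheme ⟶ W := IsOpenImmersion.lift α (B₀.ι ≫ rX) hrs
  have hs : s ≫ α = B₀.ι ≫ rX := IsOpenImmersion.lift_fac _ _ hrs
  have hsc : s ≫ cW = B₀.ι ≫ u' := by
    rw [← cancel_mono ι₁]
    show s ≫ α = _
    rw [hs]
    show B₀.ι ≫ u' ≫ ι₁ = _
    rw [Category.assoc]
  have T2 : s ≫ qY = B₀.ι ≫ β₂ := by
    show s ≫ u ≫ ι₂ = _
    rw [← h3, ← Category.assoc, hsc, Category.assoc, h2]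
  -- t lands in B₀, s lands in A₀
  have hrt₀ : Set.range t.base ⊆ Set.range B₀.ι.base := by
    rw [Scheme.Opens.range_ι]
    rintro _ ⟨a, rfl⟩
    show rX.base (t.base a) ∈ α.opensRange
    rw [← Scheme.Hom.comp_apply, T1, Scheme.Hom.comp_apply]
    exact ⟨_, rfl⟩
  let t₀ : A₀.toScheme ⟶ B₀.toScheme := IsOpenImmersion.lift B₀.ι t hrt₀
  have ht₀ : t₀ ≫ B₀.ι = t := IsOpenImmersion.lift_fac _ _ hrt₀
  have hrs₀ : Set.range s.base ⊆ Set.range A₀.ι.base := by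
    rw [Scheme.Opens.range_ι]
    rintro _ ⟨b, rfl⟩
    show qY.base (s.base b) ∈ β₂.opensRange
    rw [← Scheme.Hom.comp_apply, T2, Scheme.Hom.comp_apply]
    exact ⟨_, rfl⟩
  let s₀ : B₀.toScheme ⟶ A₀.toScheme := IsOpenImmersion.lift A₀.ι s hrs₀
  have hs₀ : s₀ ≫ A₀.ι = s := IsOpenImmersion.lift_fac _ _ hrs₀
  have e1 : t₀ ≫ s₀ = 𝟙 _ := by
    rw [← cancel_mono A₀.ι, Category.assoc, hs₀, Category.id_comp, ← cancel_mono α,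
      Category.assoc, hs, ← Category.assoc, ht₀, T1]
  have e2 : s₀ ≫ t₀ = 𝟙 _ := by
    rw [← cancel_mono B₀.ι, Category.assoc, ht₀, Category.id_comp, ← cancel_mono β₂,
      Category.assoc, ht, ← Category.assoc, hs₀, T2]
  -- the two opens
  have hmemA : aW ∈ A₀ := by
    show qY.base aW ∈ β₂.opensRange
    exact ⟨bW, hab.symm⟩
  let U₀ : X.Opens := (A₀.ι ≫ α).opensRange
  let V₀ : Y.Opens := (B₀.ι ≫ β₂).opensRange
  have hre1 : Set.range (A₀.ι ≫ α).base = Set.range U₀.ι.base := by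
    rw [Scheme.Opens.range_ι]; rfl
  have hre2 : Set.range (B₀.ι ≫ β₂).base = Set.range V₀.ι.base := by
    rw [Scheme.Opens.range_ι]; rfl
  let i₁ : A₀.toScheme ≅ U₀.toScheme := IsOpenImmersion.isoOfRangeEq (A₀.ι ≫ α) U₀.ι hre1
  let i₂ : B₀.toScheme ≅ V₀.toScheme := IsOpenImmersion.isoOfRangeEq (B₀.ι ≫ β₂) V₀.ι hre2
  have hi₁ : i₁.hom ≫ U₀.ι = A₀.ι ≫ α := IsOpenImmersion.isoOfRangeEq_hom_fac _ _ hre1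
  have hi₂ : i₂.hom ≫ V₀.ι = B₀.ι ≫ β₂ := IsOpenImmersion.isoOfRangeEq_hom_fac _ _ hre2
  refine ⟨U₀, ⟨⟨aW, hmemA⟩, rfl⟩, V₀, i₁.symm ≪≫ ⟨t₀, s₀, e1, e2⟩ ≪≫ i₂, ?_⟩
  have hq5 : qY ≫ sY = α ≫ f := by
    show (u ≫ ι₂) ≫ sY = (cW ≫ ι₁) ≫ f
    rw [← h3, Category.assoc, h5, Category.assoc]
  have hfinal : i₁.inv ≫ A₀.ι ≫ α = U₀.ι := by
    rw [Iso.inv_comp_eq, hi₁]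
  simp only [Iso.trans_hom, Iso.symm_hom, Category.assoc]
  rw [← Category.assoc i₂.hom V₀.ι sY, hi₂]
  simp only [Category.assoc]
  rw [← Category.assoc t₀ B₀.ι, ht₀, ← Category.assoc t β₂ sY, ht]
  simp only [Category.assoc]
  rw [hq5, ← Category.assoc A₀.ι α f, ← Category.assoc i₁.inv (A₀.ι ≫ α) f]
  rw [show i₁.inv ≫ A₀.ι ≫ α = U₀.ι from hfinal]

/-- A variety `X` over `k` is plain if and only if each stalk `O_{X,x}` is
`k`-isomorphic to a localization of a polynomial ring `k[x₁,…,xₙ]` at a prime ideal. -/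
theorem stmt_4 (k : Type) [Field k] (X : Scheme) (f : X ⟶ Spec (CommRingCat.of k))
    [IsIntegral X] [LocallyOfFiniteType f] [QuasiCompact f] :
    IsPlainOver k X f ↔
      ∀ x : X, ∃ (n : ℕ) (p : Ideal (MvPolynomial (Fin n) k)) (_ : p.IsPrime),
        Nonempty (@AlgEquiv k (X.presheaf.stalk x) (Localization.AtPrime p)
          _ _ _ (stalkAlg k X f x) _) := by
  constructor
  · intro H x
    obtain ⟨U, hxU, n, V, e, he⟩ := H x
    let x' : U.toScheme := ⟨x, hxU⟩
    let w : U.toScheme ⟶ AffSp k n := e.hom ≫ V.ι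
    let z : PrimeSpectrum (MvPolynomial (Fin n) k) := w.base x'
    refine ⟨n, z.asIdeal, z.isPrime, ⟨?_⟩⟩
    letI := stalkAlg k X f x
    let χ : X.presheaf.stalk x ⟶ CommRingCat.of (Localization.AtPrime z.asIdeal) :=
      U.ι.stalkMap x' ≫ inv (w.stalkMap x') ≫ (stalkIso' _ z).hom
    have key : aMap f x ≫ χ = CommRingCat.ofHom (algebraMap k (Localization.AtPrime z.asIdeal)) := by
      have h3 : Scheme.Opens.ι U ≫ f = w ≫ AffSp.toSpecK k n := by
        rw [← he]; simp [w]
      have h1 := aMap_natural U.ι f x'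
      rw [h3, aMap_natural w (AffSp.toSpecK k n) x'] at h1
      show (aMap f x ≫ U.ι.stalkMap x') ≫ inv (w.stalkMap x') ≫ (stalkIso' (MvPolynomial (Fin n) k) z).hom = _
      rw [show aMap f x ≫ U.ι.stalkMap x' = aMap (AffSp.toSpecK k n) z ≫ w.stalkMap x' from h1.symm]
      rw [Category.assoc]; erw [IsIso.hom_inv_id_assoc]
      exact aMap_toSpecK k n z.asIdeal z.isPrime
    have : IsIso χ := by
      have : IsIso (U.ι.stalkMap x') := inferInstance
      exact IsIso.comp_isIso' this (IsIso.comp_isIso' inferInstance (Iso.isIso_hom _))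
    refine AlgEquiv.ofRingEquiv (f := (asIso χ).commRingCatIsoToRingEquiv) (fun a => ?_)
    exact RingHom.congr_fun (congrArg CommRingCat.Hom.hom key) a
  · intro H
    intro x
    obtain ⟨n, p, hp, ⟨ε⟩⟩ := H x
    letI := stalkAlg k X f x
    let y : AffSp k n := (⟨p, hp⟩ : PrimeSpectrum (MvPolynomial (Fin n) k))
    -- the stalk isomorphism
    let σ : (AffSp k n).presheaf.stalk y ⟶ X.presheaf.stalk x :=
      (stalkIso' _ y).hom ≫ CommRingCat.ofHom ε.symm.toRingEquiv.toRingHom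
    have hσiso : IsIso σ := by
      refine ⟨⟨(CommRingCat.ofHom ε.toRingEquiv.toRingHom : X.presheaf.stalk x ⟶ CommRingCat.of (Localization.AtPrime p)) ≫
        (stalkIso' _ y).inv, ?_, ?_⟩⟩
      · refine CommRingCat.hom_ext (RingHom.ext fun a => ?_)
        show (stalkIso' _ y).inv (ε (ε.symm ((stalkIso' _ y).hom a))) = a
        exact (congrArg (fun t => (stalkIso' _ y).inv t)
          (ε.apply_symm_apply _)).trans
          (RingHom.congr_fun (congrArg CommRingCat.Hom.hom (stalkIso' (MvPolynomial (Fin n) k) y).hom_inv_id) a)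
      · refine CommRingCat.hom_ext (RingHom.ext fun a => ?_)
        show ε.symm ((stalkIso' _ y).hom ((stalkIso' _ y).inv (ε a))) = a
        exact (congrArg ε.symm
          (RingHom.congr_fun (congrArg CommRingCat.Hom.hom (stalkIso' (MvPolynomial (Fin n) k) y).inv_hom_id)
            (ε a))).trans (ε.symm_apply_apply a)
    haveI : IsLocalHom σ.hom := isLocalHom_of_isIso σ
    haveI : IsLocalHom (inv σ).hom := isLocalHom_of_isIso _
    have keyσ : aMap f x = aMap (AffSp.toSpecK k n) y ≫ σ := by
      refine CommRingCat.hom_ext (RingHom.ext fun a => ?_)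
      show aMap f x a =
        ε.symm ((stalkIso' _ y).hom (aMap (AffSp.toSpecK k n) y a))
      have h5 := RingHom.congr_fun (congrArg CommRingCat.Hom.hom (aMap_toSpecK k n p hp)) a
      calc aMap f x a = ε.symm (algebraMap k (Localization.AtPrime p) a) :=
            (ε.symm.commutes a).symm
        _ = _ := congrArg ε.symm h5.symm
    have keyσ' : aMap (AffSp.toSpecK k n) y = aMap f x ≫ inv σ := by
      rw [keyσ, Category.assoc, IsIso.hom_inv_id, Category.comp_id]
    -- spreading out the iso and its inverse
    let φ : Spec (X.presheaf.stalk x) ⟶ AffSp k n := Spec.map σ ≫ (AffSp k n).fromSpecStalk y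
    have hφ : φ ≫ AffSp.toSpecK k n = X.fromSpecStalk x ≫ f := by
      show Spec.map σ ≫ (AffSp k n).fromSpecStalk y ≫ AffSp.toSpecK k n = _
      rw [fromSpecStalk_comp_eq, fromSpecStalk_comp_eq, ← Spec.map_comp, ← keyσ]
    obtain ⟨U, hxU, g, hg1, hg2⟩ :=
      spread_out_of_isGermInjective' (sX := f) (sY := AffSp.toSpecK k n) φ hφ
    let φ' : Spec ((AffSp k n).presheaf.stalk y) ⟶ X := Spec.map (inv σ) ≫ X.fromSpecStalk x
    have hφ' : φ' ≫ f = (AffSp k n).fromSpecStalk y ≫ AffSp.toSpecK k n := by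
      show Spec.map (inv σ) ≫ X.fromSpecStalk x ≫ f = _
      rw [fromSpecStalk_comp_eq, fromSpecStalk_comp_eq, ← Spec.map_comp, ← keyσ']
    obtain ⟨V, hyV, g', hg'1, hg'2⟩ :=
      spread_out_of_isGermInjective' (sX := AffSp.toSpecK k n) (sY := f) φ' hφ'
    -- basic points
    let x' : U.toScheme := ⟨x, hxU⟩
    let y' : V.toScheme := ⟨y, hyV⟩
    let β : Spec (X.presheaf.stalk x) ⟶ U.toScheme := U.fromSpecStalkOfMem x hxU
    let β' : Spec ((AffSp k n).presheaf.stalk y) ⟶ V.toScheme := V.fromSpecStalkOfMem y hyV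
    have hβclosed : β.base (IsLocalRing.closedPoint _) = x' := by
      apply Subtype.ext
      show (U.ι.base (β.base (IsLocalRing.closedPoint _)) : X) = x
      erw [← Scheme.Hom.comp_apply, Scheme.Opens.fromSpecStalkOfMem_ι,
        Scheme.fromSpecStalk_closedPoint]
    have hβ'closed : β'.base (IsLocalRing.closedPoint _) = y' := by
      apply Subtype.ext
      show (V.ι.base (β'.base (IsLocalRing.closedPoint _)) : AffSp k n) = y
      erw [← Scheme.Hom.comp_apply, Scheme.Opens.fromSpecStalkOfMem_ι,
        Scheme.fromSpecStalk_closedPoint]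
    have hφclosed : φ.base (IsLocalRing.closedPoint _) = y := by
      show (Spec.map σ ≫ (AffSp k n).fromSpecStalk y).base (IsLocalRing.closedPoint _) = y
      erw [Scheme.Hom.comp_apply, Spec_closedPoint, Scheme.fromSpecStalk_closedPoint]
    have hφ'closed : φ'.base (IsLocalRing.closedPoint _) = x := by
      show (Spec.map (inv σ) ≫ X.fromSpecStalk x).base (IsLocalRing.closedPoint _) = x
      erw [Scheme.Hom.comp_apply, Spec_closedPoint, Scheme.fromSpecStalk_closedPoint]
    have hgx : g.base x' = y := by
      erw [← hβclosed, ← Scheme.Hom.comp_apply, ← hg1, hφclosed]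
    have hg'y : g'.base y' = x := by
      erw [← hβ'closed, ← Scheme.Hom.comp_apply, ← hg'1, hφ'closed]
    -- ranges
    have hrφ : Set.range φ.base ⊆ (V : Set (AffSp k n)) := by
      rintro _ ⟨t, rfl⟩
      have h1 : φ.base t ⤳ y := by
        have h2 : φ.base t ∈ Set.range ((AffSp k n).fromSpecStalk y).base :=
          ⟨(Spec.map σ).base t, (Scheme.Hom.comp_apply _ _ _).symm⟩
        rwa [Scheme.range_fromSpecStalk] at h2
      exact h1.mem_open V.2 hyV
    have hrφ' : Set.range φ'.base ⊆ (U : Set X) := by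
      rintro _ ⟨t, rfl⟩
      have h1 : φ'.base t ⤳ x := by
        have h2 : φ'.base t ∈ Set.range (X.fromSpecStalk x).base :=
          ⟨(Spec.map (inv σ)).base t, (Scheme.Hom.comp_apply _ _ _).symm⟩
        rwa [Scheme.range_fromSpecStalk] at h2
      exact h1.mem_open U.2 hxU
    -- first uniqueness: g' ∘ g = incl near x
    let U' : U.toScheme.Opens := g ⁻¹ᵁ V
    have hrβ : Set.range β.base ⊆ Set.range U'.ι.base := by
      rw [Scheme.Opens.range_ι]
      rintro _ ⟨t, rfl⟩
      show g.base (β.base t) ∈ V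
      rw [← Scheme.Hom.comp_apply, ← hg1]
      exact hrφ ⟨t, rfl⟩
    let θ : Spec (X.presheaf.stalk x) ⟶ U'.toScheme := IsOpenImmersion.lift U'.ι β hrβ
    have hθ : θ ≫ U'.ι = β := IsOpenImmersion.lift_fac _ _ hrβ
    have hrg : Set.range (U'.ι ≫ g).base ⊆ Set.range V.ι.base := by
      rw [Scheme.Opens.range_ι]
      rintro _ ⟨t, rfl⟩
      rw [Scheme.Hom.comp_apply]
      exact t.2
    let gV : U'.toScheme ⟶ V.toScheme := IsOpenImmersion.lift V.ι (U'.ι ≫ g) hrg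
    have hgV : gV ≫ V.ι = U'.ι ≫ g := IsOpenImmersion.lift_fac _ _ hrg
    have hθgV : θ ≫ gV = Spec.map σ ≫ β' := by
      rw [← cancel_mono V.ι, Category.assoc, Category.assoc, hgV, ← Category.assoc, hθ,
        Scheme.Opens.fromSpecStalkOfMem_ι, ← hg1]
    let c : U'.toScheme ⟶ X := gV ≫ g'
    let d : U'.toScheme ⟶ X := U'.ι ≫ U.ι
    have hθc : θ ≫ c = X.fromSpecStalk x := by
      show θ ≫ gV ≫ g' = _
      rw [← Category.assoc, hθgV, Category.assoc, ← hg'1]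
      show Spec.map σ ≫ Spec.map (inv σ) ≫ X.fromSpecStalk x = _
      rw [← Category.assoc, ← Spec.map_comp, IsIso.inv_hom_id, Spec.map_id, Category.id_comp]
    have hθd : θ ≫ d = X.fromSpecStalk x := by
      show θ ≫ U'.ι ≫ U.ι = _
      rw [← Category.assoc, hθ, Scheme.Opens.fromSpecStalkOfMem_ι]
    have hx'U' : x' ∈ U' := by
      show g.base x' ∈ V
      rw [hgx]; exact hyV
    let x'' : U'.toScheme := ⟨x', hx'U'⟩
    have hθeq : θ = Spec.map (inv (U.ι.stalkMap x')) ≫ U'.fromSpecStalkOfMem x' hx'U' := by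
      refine (cancel_mono U'.ι).mp (hθ.trans ?_)
      exact (congrArg (fun g => Spec.map (inv (U.ι.stalkMap x')) ≫ g)
        (Scheme.Opens.fromSpecStalkOfMem_ι U' x' hx'U')).symm.trans (Category.assoc _ _ _).symm
    haveI : U'.toScheme.IsGermInjectiveAt x'' := by
      have h2 := isGermInjectiveAt_iff_of_isOpenImmersion (f := U'.ι ≫ U.ι) (x := x'')
      rw [show (U'.ι ≫ U.ι).base x'' = x from rfl] at h2
      exact h2.mp inferInstance
    have hfsc : U'.toScheme.fromSpecStalk x'' ≫ c = U'.toScheme.fromSpecStalk x'' ≫ d := by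
      have h3 : θ ≫ c = θ ≫ d := hθc.trans hθd.symm
      rw [hθeq, show U'.fromSpecStalkOfMem x' hx'U' =
        Spec.map (inv (U'.ι.stalkMap x'')) ≫ U'.toScheme.fromSpecStalk x'' from rfl] at h3
      haveI : IsIso (U.ι.stalkMap x') := inferInstance
      haveI : IsIso (U'.ι.stalkMap x'') := inferInstance
      have h4 := (cancel_epi (Spec.map (inv (U.ι.stalkMap x')))).mp ((Category.assoc _ _ _).symm.trans (h3.trans (Category.assoc _ _ _)))
      exact (cancel_epi (Spec.map (inv (U'.ι.stalkMap x'')))).mp ((Category.assoc _ _ _).symm.trans (h4.trans (Category.assoc _ _ _)))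

    obtain ⟨W, hxW, hW⟩ := spread_out_unique_of_isGermInjective' c d hfsc
    -- second uniqueness: g ∘ g' = incl near y
    let V' : V.toScheme.Opens := g' ⁻¹ᵁ U
    have hrβ' : Set.range β'.base ⊆ Set.range V'.ι.base := by
      rw [Scheme.Opens.range_ι]
      rintro _ ⟨t, rfl⟩
      show g'.base (β'.base t) ∈ U
      rw [← Scheme.Hom.comp_apply, ← hg'1]
      exact hrφ' ⟨t, rfl⟩
    let θ' : Spec ((AffSp k n).presheaf.stalk y) ⟶ V'.toScheme := IsOpenImmersion.lift V'.ι β' hrβ'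
    have hθ' : θ' ≫ V'.ι = β' := IsOpenImmersion.lift_fac _ _ hrβ'
    have hrg' : Set.range (V'.ι ≫ g').base ⊆ Set.range U.ι.base := by
      rw [Scheme.Opens.range_ι]
      rintro _ ⟨t, rfl⟩
      rw [Scheme.Hom.comp_apply]
      exact t.2
    let g'U : V'.toScheme ⟶ U.toScheme := IsOpenImmersion.lift U.ι (V'.ι ≫ g') hrg'
    have hg'U : g'U ≫ U.ι = V'.ι ≫ g' := IsOpenImmersion.lift_fac _ _ hrg'
    have hθ'g'U : θ' ≫ g'U = Spec.map (inv σ) ≫ β := by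
      rw [← cancel_mono U.ι, Category.assoc, Category.assoc, hg'U, ← Category.assoc, hθ',
        Scheme.Opens.fromSpecStalkOfMem_ι, ← hg'1]
    let c' : V'.toScheme ⟶ AffSp k n := g'U ≫ g
    let d' : V'.toScheme ⟶ AffSp k n := V'.ι ≫ V.ι
    have hθ'c' : θ' ≫ c' = (AffSp k n).fromSpecStalk y := by
      show θ' ≫ g'U ≫ g = _
      rw [← Category.assoc, hθ'g'U, Category.assoc, ← hg1]
      show Spec.map (inv σ) ≫ Spec.map σ ≫ (AffSp k n).fromSpecStalk y = _
      rw [← Category.assoc, ← Spec.map_comp, IsIso.hom_inv_id, Spec.map_id, Category.id_comp]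
    have hθ'd' : θ' ≫ d' = (AffSp k n).fromSpecStalk y := by
      show θ' ≫ V'.ι ≫ V.ι = _
      rw [← Category.assoc, hθ', Scheme.Opens.fromSpecStalkOfMem_ι]
    have hy'V' : y' ∈ V' := by
      show g'.base y' ∈ U
      rw [hg'y]; exact hxU
    let y'' : V'.toScheme := ⟨y', hy'V'⟩
    have hθ'eq : θ' = Spec.map (inv (V.ι.stalkMap y')) ≫ V'.fromSpecStalkOfMem y' hy'V' := by
      refine (cancel_mono V'.ι).mp (hθ'.trans ?_)
      exact (congrArg (fun g => Spec.map (inv (V.ι.stalkMap y')) ≫ g)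
        (Scheme.Opens.fromSpecStalkOfMem_ι V' y' hy'V')).symm.trans (Category.assoc _ _ _).symm
    haveI : V'.toScheme.IsGermInjectiveAt y'' := by
      have h2 := isGermInjectiveAt_iff_of_isOpenImmersion (f := V'.ι ≫ V.ι) (x := y'')
      rw [show (V'.ι ≫ V.ι).base y'' = y from rfl] at h2
      exact h2.mp inferInstance
    have hfsc' : V'.toScheme.fromSpecStalk y'' ≫ c' = V'.toScheme.fromSpecStalk y'' ≫ d' := by
      have h3 : θ' ≫ c' = θ' ≫ d' := hθ'c'.trans hθ'd'.symm
      rw [hθ'eq, show V'.fromSpecStalkOfMem y' hy'V' =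
        Spec.map (inv (V'.ι.stalkMap y'')) ≫ V'.toScheme.fromSpecStalk y'' from rfl] at h3
      haveI : IsIso (V.ι.stalkMap y') := inferInstance
      haveI : IsIso (V'.ι.stalkMap y'') := inferInstance
      have h4 := (cancel_epi (Spec.map (inv (V.ι.stalkMap y')))).mp ((Category.assoc _ _ _).symm.trans (h3.trans (Category.assoc _ _ _)))
      exact (cancel_epi (Spec.map (inv (V'.ι.stalkMap y'')))).mp ((Category.assoc _ _ _).symm.trans (h4.trans (Category.assoc _ _ _)))

    obtain ⟨W', hyW', hW'⟩ := spread_out_unique_of_isGermInjective' c' d' hfsc'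
    -- endgame
    let xW : W.toScheme := ⟨x'', hxW⟩
    let yW : W'.toScheme := ⟨y'', hyW'⟩
    have h1 : (W.ι ≫ gV) ≫ g' = (W.ι ≫ U'.ι) ≫ U.ι := by
      rw [Category.assoc, Category.assoc]; exact hW
    have h2 : (W'.ι ≫ g'U) ≫ g = (W'.ι ≫ V'.ι) ≫ V.ι := by
      rw [Category.assoc, Category.assoc]; exact hW'
    have h3 : (W.ι ≫ U'.ι) ≫ g = (W.ι ≫ gV) ≫ V.ι := by
      rw [Category.assoc, Category.assoc, hgV]
    have h4 : (W'.ι ≫ V'.ι) ≫ g' = (W'.ι ≫ g'U) ≫ U.ι := by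
      rw [Category.assoc, Category.assoc, hg'U]
    have hab : ((W.ι ≫ gV) ≫ V.ι).base xW = ((W'.ι ≫ V'.ι) ≫ V.ι).base yW := by
      have l : ((W.ι ≫ gV) ≫ V.ι).base xW = y := by
        calc ((W.ι ≫ gV) ≫ V.ι).base xW
            = (gV ≫ V.ι).base (W.ι.base xW) := by
              rw [Scheme.Hom.comp_apply, Scheme.Hom.comp_apply, Scheme.Hom.comp_apply]
          _ = (U'.ι ≫ g).base (W.ι.base xW) := by rw [hgV]
          _ = g.base (U'.ι.base (W.ι.base xW)) := Scheme.Hom.comp_apply _ _ _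
          _ = y := hgx
      have r : ((W'.ι ≫ V'.ι) ≫ V.ι).base yW = y := rfl
      rw [l, r]
    obtain ⟨U₀, hU₀, V₀, e, he⟩ := endgame f (AffSp.toSpecK k n) U.ι V.ι (W.ι ≫ gV) g'
      (W'.ι ≫ g'U) g (W.ι ≫ U'.ι) (W'.ι ≫ V'.ι) h1 h2 h3 h4 hg2 xW yW hab
    exact ⟨U₀, hU₀, n, V₀, e, he⟩
end

section
/- Let k be a field and let X and Y be plain varieties over k. Then the fiber product X ×_k Y is a plain variety over k. -/
open AlgebraicGeometry CategoryTheory Limits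

open TensorProduct

variable (k : Type) [Field k]

noncomputable def tEquiv (n m : ℕ) :
    MvPolynomial (Fin (n + m)) k ≃ₐ[k]
      (MvPolynomial (Fin n) k ⊗[k] MvPolynomial (Fin m) k) :=
  (((MvPolynomial.algebraTensorAlgEquiv k
        (MvPolynomial (Fin n) k) (σ := Fin m)).restrictScalars k).trans
    (((MvPolynomial.sumAlgEquiv k (Fin m) (Fin n)).symm).trans
      (MvPolynomial.renameEquiv k ((Equiv.sumComm (Fin m) (Fin n)).trans finSumFinEquiv)))).symm

noncomputable def tIso (n m : ℕ) :
    Spec (CommRingCat.of (MvPolynomial (Fin n) k ⊗[k] MvPolynomial (Fin m) k)) ≅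
      AffSp k (n + m) where
  hom := Spec.map (CommRingCat.ofHom (tEquiv k n m).toRingHom)
  inv := Spec.map (CommRingCat.ofHom (tEquiv k n m).symm.toRingHom)
  hom_inv_id := by
    show Spec.map (CommRingCat.ofHom (tEquiv k n m).toRingHom) ≫
      Spec.map (CommRingCat.ofHom (tEquiv k n m).symm.toRingHom) = _
    rw [← Spec.map_comp, ← Spec.map_id]
    congr 1
    refine CommRingCat.hom_ext (RingHom.ext fun a => ?_)
    exact (tEquiv k n m).apply_symm_apply a
  inv_hom_id := by
    show Spec.map (CommRingCat.ofHom (tEquiv k n m).symm.toRingHom) ≫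
      Spec.map (CommRingCat.ofHom (tEquiv k n m).toRingHom) =
        𝟙 (Spec (CommRingCat.of (MvPolynomial (Fin (n + m)) k)))
    rw [← Spec.map_comp]
    show _ = 𝟙 (Spec (CommRingCat.of (MvPolynomial (Fin (n + m)) k)))
    rw [← Spec.map_id]
    congr 1
    refine CommRingCat.hom_ext (RingHom.ext fun a => ?_)
    exact (tEquiv k n m).symm_apply_apply a

lemma tIso_hom_toSpecK (n m : ℕ) :
    (tIso k n m).hom ≫ AffSp.toSpecK k (n + m) =
      Spec.map (CommRingCat.ofHom
        (algebraMap k (MvPolynomial (Fin n) k ⊗[k] MvPolynomial (Fin m) k))) := by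
  simp only [tIso, AffSp.toSpecK]
  show Spec.map (CommRingCat.ofHom (tEquiv k n m).toRingHom) ≫
    Spec.map (CommRingCat.ofHom (algebraMap k (MvPolynomial (Fin (n + m)) k))) = _
  rw [← Spec.map_comp]
  congr 1
  ext a
  exact (tEquiv k n m).commutes a

lemma algebraMap_tensor_left (n m : ℕ) :
    CommRingCat.ofHom
        (algebraMap k (MvPolynomial (Fin n) k ⊗[k] MvPolynomial (Fin m) k)) =
      CommRingCat.ofHom (algebraMap k (MvPolynomial (Fin n) k)) ≫
        CommRingCat.ofHom
          (Algebra.TensorProduct.includeLeftRingHom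
            (R := k) (A := MvPolynomial (Fin n) k) (B := MvPolynomial (Fin m) k)) := by
  ext a
  simp [Algebra.TensorProduct.algebraMap_apply]

lemma master {X Y : Scheme}
    {f : X ⟶ Spec (CommRingCat.of k)} {g : Y ⟶ Spec (CommRingCat.of k)}
    (hX : IsPlainOver k X f) (hY : IsPlainOver k Y g) (x : X) (y : Y) :
    ∃ (U : X.Opens) (W : Y.Opens) (O : (pullback f g).Opens),
      x ∈ U ∧ y ∈ W ∧
      (O : Set ↑(pullback f g)) =
        (pullback.fst f g).base ⁻¹' (U : Set X) ∩
          (pullback.snd f g).base ⁻¹' (W : Set Y) ∧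
      IsIntegral (O : Scheme) ∧
      ∃ (N : ℕ) (V' : (AffSp k N).Opens) (e : (O : Scheme) ≅ (V' : Scheme)),
        e.hom ≫ Scheme.Opens.ι V' ≫ AffSp.toSpecK k N =
          Scheme.Opens.ι O ≫ (pullback.fst f g ≫ f) := by
  obtain ⟨U, hxU, n, V, e, he⟩ := hX x
  obtain ⟨W, hyW, m, T, e', he'⟩ := hY y
  -- the open immersion from the local pullback into the global pullback
  set j : pullback (U.ι ≫ f) (W.ι ≫ g) ⟶ pullback f g :=
    pullback.map _ _ f g U.ι W.ι (𝟙 _) (by simp) (by simp) with hj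
  haveI : IsOpenImmersion j := by
    rw [hj]; infer_instance
  -- iso with the pullback of charts
  set c : pullback (U.ι ≫ f) (W.ι ≫ g) ⟶
      pullback (V.ι ≫ AffSp.toSpecK k n) (T.ι ≫ AffSp.toSpecK k m) :=
    pullback.map _ _ _ _ e.hom e'.hom (𝟙 _)
      (by rw [Category.comp_id, ← he]) (by rw [Category.comp_id, ← he']) with hc
  haveI : IsIso c := by rw [hc]; infer_instance
  -- open immersion into the pullback of affine spaces
  set q : pullback (V.ι ≫ AffSp.toSpecK k n) (T.ι ≫ AffSp.toSpecK k m) ⟶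
      pullback (AffSp.toSpecK k n) (AffSp.toSpecK k m) :=
    pullback.map _ _ _ _ V.ι T.ι (𝟙 _) (by simp) (by simp) with hq
  haveI : IsOpenImmersion q := by rw [hq]; infer_instance
  -- the iso with Spec of the tensor product
  set Φ : pullback (AffSp.toSpecK k n) (AffSp.toSpecK k m) ≅
      Spec (CommRingCat.of (MvPolynomial (Fin n) k ⊗[k] MvPolynomial (Fin m) k)) :=
    pullbackSpecIso k (MvPolynomial (Fin n) k) (MvPolynomial (Fin m) k) with hΦ
  set ι : pullback (U.ι ≫ f) (W.ι ≫ g) ⟶ AffSp k (n + m) :=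
    c ≫ q ≫ Φ.hom ≫ (tIso k n m).hom with hι
  haveI : IsOpenImmersion ι := by rw [hι]; infer_instance
  -- compatibility over Spec k
  have hΦ1 : Φ.hom ≫ Spec.map (CommRingCat.ofHom
      (algebraMap k (MvPolynomial (Fin n) k ⊗[k] MvPolynomial (Fin m) k))) =
      pullback.fst (AffSp.toSpecK k n) (AffSp.toSpecK k m) ≫ AffSp.toSpecK k n := by
    rw [algebraMap_tensor_left, Spec.map_comp, ← Category.assoc]
    rw [hΦ]
    exact congrArg (· ≫ AffSp.toSpecK k n)
      (pullbackSpecIso_hom_fst (R := k) (S := MvPolynomial (Fin n) k) (T := MvPolynomial (Fin m) k))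
  have hcompat : ι ≫ AffSp.toSpecK k (n + m) =
      pullback.fst (U.ι ≫ f) (W.ι ≫ g) ≫ (U.ι ≫ f) := by
    rw [hι]
    simp only [Category.assoc]
    rw [tIso_hom_toSpecK, hΦ1]
    rw [hq, pullback.lift_fst_assoc]
    simp only [Category.assoc]
    rw [hc, pullback.lift_fst_assoc]
    simp only [Category.assoc]
    rw [he]
  -- a point of the local pullback above (x, y)
  obtain ⟨p0, hp0x, hp0y⟩ := Scheme.Pullback.exists_preimage_pullback
    (f := U.ι ≫ f) (g := W.ι ≫ g) ⟨x, hxU⟩ ⟨y, hyW⟩ (Subsingleton.elim _ _)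
  -- the isos with the ranges
  set iso1 : pullback (U.ι ≫ f) (W.ι ≫ g) ≅ (j.opensRange : Scheme) :=
    IsOpenImmersion.isoOfRangeEq j (Scheme.Opens.ι _)
      (by rw [Scheme.Opens.range_ι]; rfl) with hiso1
  set iso2 : pullback (U.ι ≫ f) (W.ι ≫ g) ≅ (ι.opensRange : Scheme) :=
    IsOpenImmersion.isoOfRangeEq ι (Scheme.Opens.ι _)
      (by rw [Scheme.Opens.range_ι]; rfl) with hiso2
  have h1 : iso2.hom ≫ (ι.opensRange).ι = ι :=
    IsOpenImmersion.isoOfRangeEq_hom_fac _ _ _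
  have h2 : iso1.hom ≫ (j.opensRange).ι = j :=
    IsOpenImmersion.isoOfRangeEq_hom_fac _ _ _
  -- nonemptiness and integrality
  haveI : IsDomain (CommRingCat.of (MvPolynomial (Fin (n + m)) k)) :=
    inferInstanceAs (IsDomain (MvPolynomial (Fin (n + m)) k))
  haveI : IsIntegral (AffSp k (n + m)) :=
    inferInstanceAs (IsIntegral (Spec (CommRingCat.of (MvPolynomial (Fin (n + m)) k))))
  haveI : Nonempty ↑(ι.opensRange : Scheme) := ⟨⟨ι.base p0, ⟨p0, rfl⟩⟩⟩
  haveI : IsIntegral (ι.opensRange : Scheme) :=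
    isIntegral_of_isOpenImmersion (Scheme.Opens.ι _)
  haveI : Nonempty ↑(j.opensRange : Scheme) := ⟨⟨j.base p0, ⟨p0, rfl⟩⟩⟩
  haveI : IsIntegral (j.opensRange : Scheme) :=
    isIntegral_of_isOpenImmersion (iso1.symm ≪≫ iso2).hom
  refine ⟨U, W, j.opensRange, hxU, hyW, ?_, inferInstance, n + m, ι.opensRange,
    iso1.symm ≪≫ iso2, ?_⟩
  · show Set.range j.base = _
    rw [hj, Scheme.Pullback.range_map]
    rw [Scheme.Opens.range_ι, Scheme.Opens.range_ι]
  · rw [← cancel_epi iso1.hom]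
    simp only [Iso.trans_hom, Iso.symm_hom, Iso.hom_inv_id_assoc, Category.assoc]
    rw [reassoc_of% h1, hcompat, reassoc_of% h2, hj, pullback.lift_fst_assoc]
    simp only [Category.assoc]

/-- The fiber product over `k` of two plain varieties `X` and `Y` over a field `k` is
again a plain variety over `k`. -/
theorem stmt_7 (k : Type) [Field k]
    (X Y : Scheme) (f : X ⟶ Spec (CommRingCat.of k)) (g : Y ⟶ Spec (CommRingCat.of k))
    [IsIntegral X] [LocallyOfFiniteType f] [QuasiCompact f]
    [IsIntegral Y] [LocallyOfFiniteType g] [QuasiCompact g]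
    (hX : IsPlainOver k X f) (hY : IsPlainOver k Y g) :
    IsIntegral (pullback f g) ∧
      LocallyOfFiniteType (pullback.fst f g ≫ f) ∧
      QuasiCompact (pullback.fst f g ≫ f) ∧
      IsPlainOver k (pullback f g) (pullback.fst f g ≫ f) := by
  have mem_of : ∀ (z : ↑(pullback f g)) (U : X.Opens) (W : Y.Opens)
      (O : (pullback f g).Opens),
      (O : Set ↑(pullback f g)) =
        (pullback.fst f g).base ⁻¹' (U : Set X) ∩
          (pullback.snd f g).base ⁻¹' (W : Set Y) →
      (pullback.fst f g).base z ∈ U → (pullback.snd f g).base z ∈ W → z ∈ O := by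
    intro z U W O hset hU hW
    show z ∈ (O : Set _)
    rw [hset]; exact ⟨hU, hW⟩
  have irr : ∀ O : (pullback f g).Opens, IsIntegral (O : Scheme) →
      IsIrreducible (O : Set ↑(pullback f g)) := by
    intro O hO
    haveI := hO
    have h := (IrreducibleSpace.isIrreducible_univ (X := ↑(O : Scheme))).image
      (O.ι.base) (O.ι.base.hom.continuous.continuousOn)
    rwa [Set.image_univ, Scheme.Opens.range_ι] at h
  haveI hNE : Nonempty ↑(pullback f g) := by
    obtain ⟨z, -, -⟩ := Scheme.Pullback.exists_preimage_pullback (f := f) (g := g)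
      (Nonempty.some inferInstance) (Nonempty.some inferInstance) (Subsingleton.elim _ _)
    exact ⟨z⟩
  haveI hpre : PreirreducibleSpace ↑(pullback f g) := by
    constructor
    intro u v hu hv hune hvne
    obtain ⟨zu, -, hzu⟩ := hune
    obtain ⟨zv, -, hzv⟩ := hvne
    obtain ⟨U₁, W₁, O₁, hU₁, hW₁, hset₁, hint₁, -⟩ :=
      master k hX hY ((pullback.fst f g).base zu) ((pullback.snd f g).base zu)
    obtain ⟨U₂, W₂, O₂, hU₂, hW₂, hset₂, hint₂, -⟩ :=
      master k hX hY ((pullback.fst f g).base zv) ((pullback.snd f g).base zv)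
    have hz₁ : zu ∈ O₁ := mem_of zu _ _ _ hset₁ hU₁ hW₁
    have hz₂ : zv ∈ O₂ := mem_of zv _ _ _ hset₂ hU₂ hW₂
    obtain ⟨x', hx'⟩ := nonempty_preirreducible_inter
      U₁.isOpen U₂.isOpen ⟨_, hU₁⟩ ⟨_, hU₂⟩
    obtain ⟨y', hy'⟩ := nonempty_preirreducible_inter
      W₁.isOpen W₂.isOpen ⟨_, hW₁⟩ ⟨_, hW₂⟩
    obtain ⟨w, hwx, hwy⟩ := Scheme.Pullback.exists_preimage_pullback (f := f) (g := g)
      x' y' (Subsingleton.elim _ _)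
    have hw₁ : w ∈ O₁ := mem_of w _ _ _ hset₁
      (by rw [hwx]; exact hx'.1) (by rw [hwy]; exact hy'.1)
    have hw₂ : w ∈ O₂ := mem_of w _ _ _ hset₂
      (by rw [hwx]; exact hx'.2) (by rw [hwy]; exact hy'.2)
    have hi₁ := irr O₁ hint₁
    have hi₂ := irr O₂ hint₂
    obtain ⟨t1, ht1O₁, ht1u, ht1O₂⟩ :=
      hi₁.2 u (O₂ : Set _) hu O₂.isOpen ⟨zu, hz₁, hzu⟩ ⟨w, hw₁, hw₂⟩
    obtain ⟨t2, -, ⟨ht2u, -⟩, ht2v⟩ :=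
      hi₂.2 ((u ∩ (O₁ : Set _))) v (hu.inter O₁.isOpen) hv
        ⟨t1, ht1O₂, ht1u, ht1O₁⟩ ⟨zv, hz₂, hzv⟩
    exact ⟨t2, Set.mem_univ _, ht2u, ht2v⟩
  haveI hstalks : ∀ z : ↑(pullback f g),
      _root_.IsReduced ((pullback f g).presheaf.stalk z) := by
    intro z
    obtain ⟨U, W, O, hU, hW, hset, hint, -⟩ :=
      master k hX hY ((pullback.fst f g).base z) ((pullback.snd f g).base z)
    have hz : z ∈ O := mem_of z _ _ _ hset hU hW
    haveI := hint
    let pt : ↑(O : Scheme) := ⟨z, hz⟩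
    have hinj : Function.Injective (O.ι.stalkMap pt) :=
      (asIso (O.ι.stalkMap pt)).commRingCatIsoToRingEquiv.injective
    exact isReduced_of_injective (O.ι.stalkMap pt).hom hinj
  haveI : IsReduced (pullback f g) := isReduced_of_isReduced_stalk _
  haveI : IrreducibleSpace ↑(pullback f g) := { toNonempty := hNE }
  haveI : IsIntegral (pullback f g) := isIntegral_of_irreducibleSpace_of_isReduced _
  haveI : LocallyOfFiniteType (pullback.fst f g) :=
    inferInstance
  refine ⟨inferInstance, inferInstance, inferInstance, ?_⟩
  intro z
  obtain ⟨U, W, O, hU, hW, hset, hint, N, V', e, hcomp⟩ :=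
    master k hX hY ((pullback.fst f g).base z) ((pullback.snd f g).base z)
  exact ⟨O, mem_of z _ _ _ hset hU hW, N, V', e, hcomp⟩
end

section
/- Let R be an integral domain with fraction field K, let I ⊆ R be an ideal, and let a ∈ I be nonzero. Then the set { z ∈ K : there exist n ∈ ℕ and x ∈ Iⁿ with z = x / aⁿ } is equal to the R-subalgebra of K generated by the set { b / a : b ∈ I }. (This identifies the affine chart ring R[I/a] of the blowup of Spec R along I.) -/
/-- For an integral domain `R` with fraction field `K`, an ideal `I ⊆ R` and a nonzero
`a ∈ I`, the set `{x/aⁿ : x ∈ Iⁿ, n ∈ ℕ}` equals the `R`-subalgebra of `K` generated by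
`{b/a : b ∈ I}`.  (This identifies the affine chart ring `R[I/a]` of the blowup of
`Spec R` along `I`.) -/
theorem stmt_8 (R : Type*) [CommRing R] [IsDomain R] (I : Ideal R) (a : R)
    (haI : a ∈ I) (ha : a ≠ 0) :
    {z : FractionRing R | ∃ (n : ℕ) (x : R), x ∈ I ^ n ∧
        z = algebraMap R (FractionRing R) x / (algebraMap R (FractionRing R) a) ^ n} =
      (Algebra.adjoin R
        {z : FractionRing R | ∃ b ∈ I,
          z = algebraMap R (FractionRing R) b / algebraMap R (FractionRing R) a} :
        Subalgebra R (FractionRing R)) := by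
  set K := FractionRing R
  set f : R →+* K := algebraMap R K with hf
  have hfa : f a ≠ 0 := by
    rw [map_ne_zero_iff f (IsFractionRing.injective R K)]
    exact ha
  ext z
  simp only [Set.mem_setOf_eq, SetLike.mem_coe]
  constructor
  · rintro ⟨n, x, hx, rfl⟩
    induction n generalizing x with
    | zero =>
      simp only [pow_zero, div_one]
      exact Subalgebra.algebraMap_mem _ x
    | succ n ih =>
      rw [pow_succ'] at hx
      refine Submodule.mul_induction_on hx (fun b hb y hy => ?_) (fun p q hp hq => ?_)
      · have h1 : f b / f a ∈ Algebra.adjoin R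
            {z : K | ∃ b ∈ I, z = f b / f a} :=
          Algebra.subset_adjoin ⟨b, hb, rfl⟩
        have h2 := ih y hy
        have : f (b * y) / f a ^ (n + 1) = (f b / f a) * (f y / f a ^ n) := by
          rw [map_mul, pow_succ', div_mul_div_comm]
        rw [this]
        exact mul_mem h1 h2
      · rw [map_add, add_div]
        exact add_mem hp hq
  · intro hz
    let T : Subalgebra R K :=
      { carrier := {z : K | ∃ (n : ℕ) (x : R), x ∈ I ^ n ∧ z = f x / f a ^ n}
        one_mem' := ⟨0, 1, by simp, by simp⟩
        zero_mem' := ⟨0, 0, by simp, by simp⟩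
        mul_mem' := by
          rintro _ _ ⟨n, x, hx, rfl⟩ ⟨m, y, hy, rfl⟩
          refine ⟨n + m, x * y, ?_, ?_⟩
          · rw [pow_add]; exact Submodule.mul_mem_mul hx hy
          · rw [map_mul, pow_add, div_mul_div_comm]
        add_mem' := by
          rintro _ _ ⟨n, x, hx, rfl⟩ ⟨m, y, hy, rfl⟩
          refine ⟨n + m, x * a ^ m + y * a ^ n, ?_, ?_⟩
          · refine add_mem ?_ ?_
            · rw [pow_add]; exact Submodule.mul_mem_mul hx (Ideal.pow_mem_pow haI m)
            · rw [pow_add, mul_comm (I ^ n)]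
              exact Submodule.mul_mem_mul hy (Ideal.pow_mem_pow haI n)
          · have hn : f a ^ n ≠ 0 := pow_ne_zero _ hfa
            have hm : f a ^ m ≠ 0 := pow_ne_zero _ hfa
            rw [map_add, map_mul, map_mul, map_pow, map_pow, pow_add,
              div_add_div _ _ hn hm, mul_comm (f a ^ n) (f y)]
        algebraMap_mem' := fun r => ⟨0, r, by simp, by simp [hf]⟩ }
    exact Algebra.adjoin_le (S := T)
      (by rintro _ ⟨b, hb, rfl⟩; exact ⟨1, b, by simpa using hb, by simp⟩) hz
end

section
/- Let A be an integral domain with fraction field K, let f ∈ A, let x₁,…,x_r ∈ A, let g₁,…,g_r be units of A, and set f_j = f + x_j·g_j for j = 1,…,r. Fix i with 1 ≤ i ≤ r and assume fᵢ ≠ 0. Then, as A-subalgebras of K, A[f/fᵢ, f₁/fᵢ, …, f_r/fᵢ] = A[x₁/fᵢ, …, x_r/fᵢ]. -/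
/-- Let `A` be a domain with fraction field `K`, `f ∈ A`, `x₁,…,x_r ∈ A`,
`g₁,…,g_r` units of `A`, and `f_j = f + x_j·g_j`.  Fix `i` with `fᵢ ≠ 0`.  Then, as
`A`-subalgebras of `K`, `A[f/fᵢ, f₁/fᵢ, …, f_r/fᵢ] = A[x₁/fᵢ, …, x_r/fᵢ]`. -/
theorem stmt_12 (A : Type*) [CommRing A] [IsDomain A] (r : ℕ)
    (f : A) (x : Fin r → A) (g : Fin r → Aˣ)
    (f' : Fin r → A) (hf' : ∀ j, f' j = f + x j * (g j : A))
    (i : Fin r) (hfi : f' i ≠ 0) :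
    Algebra.adjoin A
        ({algebraMap A (FractionRing A) f / algebraMap A (FractionRing A) (f' i)} ∪
          Set.range fun j : Fin r =>
            algebraMap A (FractionRing A) (f' j) / algebraMap A (FractionRing A) (f' i)) =
      Algebra.adjoin A
        (Set.range fun j : Fin r =>
          algebraMap A (FractionRing A) (x j) / algebraMap A (FractionRing A) (f' i)) := by
  set K := FractionRing A
  set φ := algebraMap A K with hφ
  have hu : φ (f' i) ≠ 0 := fun h =>
    hfi ((map_eq_zero_iff φ (IsFractionRing.injective A K)).mp h)
  -- key identity: φ f / u = 1 - φ (g i) * (φ (x i) / u)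
  have hfdiv : φ f / φ (f' i) = 1 - φ (g i) * (φ (x i) / φ (f' i)) := by
    have : φ (f' i) = φ f + φ (x i) * φ (g i) := by rw [hf' i]; push_cast [map_add, map_mul]; ring
    rw [eq_sub_iff_add_eq, ← mul_div_assoc, ← add_div, div_eq_one_iff_eq hu]
    rw [this]; ring
  apply le_antisymm
  · rw [Algebra.adjoin_le_iff]
    have hxmem : ∀ j, φ (x j) / φ (f' i) ∈
        Algebra.adjoin A (Set.range fun j : Fin r => φ (x j) / φ (f' i)) :=
      fun j => Algebra.subset_adjoin ⟨j, rfl⟩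
    have hfmem : φ f / φ (f' i) ∈
        Algebra.adjoin A (Set.range fun j : Fin r => φ (x j) / φ (f' i)) := by
      rw [hfdiv]
      exact sub_mem (one_mem _) (mul_mem (Subalgebra.algebraMap_mem _ _) (hxmem i))
    rintro y (hy | ⟨j, rfl⟩)
    · rw [Set.mem_singleton_iff] at hy
      rw [hy]; exact hfmem
    · have hj : φ (f' j) / φ (f' i) = φ f / φ (f' i) + φ (g j) * (φ (x j) / φ (f' i)) := by
        have : φ (f' j) = φ f + φ (x j) * φ (g j) := by
          rw [hf' j]; push_cast [map_add, map_mul]; ring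
        rw [this]; ring
      show φ (f' j) / φ (f' i) ∈ _
      rw [hj]
      exact add_mem hfmem (mul_mem (Subalgebra.algebraMap_mem _ _) (hxmem j))
  · rw [Algebra.adjoin_le_iff]
    rintro y ⟨j, rfl⟩
    have hfmem : φ f / φ (f' i) ∈
        Algebra.adjoin A
          ({φ f / φ (f' i)} ∪ Set.range fun j : Fin r => φ (f' j) / φ (f' i)) :=
      Algebra.subset_adjoin (Or.inl rfl)
    have hfjmem : φ (f' j) / φ (f' i) ∈
        Algebra.adjoin A
          ({φ f / φ (f' i)} ∪ Set.range fun j : Fin r => φ (f' j) / φ (f' i)) :=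
      Algebra.subset_adjoin (Or.inr ⟨j, rfl⟩)
    have hx : φ (x j) / φ (f' i)
        = (φ (f' j) / φ (f' i) - φ f / φ (f' i)) * φ (((g j)⁻¹ : Aˣ) : A) := by
      have hxa : x j = (f' j - f) * (((g j)⁻¹ : Aˣ) : A) := by
        rw [hf' j, add_sub_cancel_left, Units.mul_inv_cancel_right]
      rw [hxa]
      push_cast [map_mul, map_sub]
      ring
    show φ (x j) / φ (f' i) ∈ _
    rw [hx]
    exact mul_mem (sub_mem hfjmem hfmem) (Subalgebra.algebraMap_mem _ _)
end

section
/- Let k be a field, let 1 ≤ r < n, let R = k[x₁,…,xₙ], let f be a nonzero polynomial in the variables x_{r+1},…,xₙ only, and for i = 1,…,r set fᵢ = f(x_{r+1},…,x_{n−1}, xₙ + xᵢ). Let g ∈ R be nonzero and let A = R[1/g] ⊆ K = k(x₁,…,xₙ) be the localization of R at g. Assume that for each i the polynomial gᵢ := (fᵢ − f)/xᵢ (which lies in R) is a unit in A. Then the A-subalgebra A[f₁/f, …, f_r/f] of K is isomorphic, as a k-algebra, to a localization of the polynomial ring k[y₁,…,yₙ] at a single element. (This is the first plain chart in the proof that the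 blowup along Z is plain.) -/
set_option synthInstance.maxHeartbeats 1000000
set_option maxHeartbeats 2000000

open MvPolynomial

/-- The canonical map from the polynomial ring `k[x₁,…,xₙ]` to its fraction field
`k(x₁,…,xₙ)`. -/
noncomputable def toFrac (k : Type*) [Field k] (n : ℕ) :
    MvPolynomial (Fin n) k →+* FractionRing (MvPolynomial (Fin n) k) :=
  algebraMap _ _

/-- The substitution `xₙ ↦ xₙ + xᵢ` (fixing all other variables) on `k[x₁,…,xₙ]`. -/
noncomputable def substLast (k : Type*) [Field k] (n : ℕ) (i : Fin n) :
    MvPolynomial (Fin n) k →ₐ[k] MvPolynomial (Fin n) k :=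
  aeval (fun j : Fin n => if (j : ℕ) = n - 1 then X j + X i else X j)

set_option synthInstance.maxHeartbeats 800000 in
/-- The `k`-algebra structure on an iterated subalgebra `B ⊆ K` over
`A ⊆ K = k(x₁,…,xₙ)`, coming from `k → k[x₁,…,xₙ] → A → B`. -/
noncomputable def algebraGen (k : Type*) [Field k] (n : ℕ)
    (A : Subalgebra (MvPolynomial (Fin n) k) (FractionRing (MvPolynomial (Fin n) k)))
    (B : Subalgebra A (FractionRing (MvPolynomial (Fin n) k))) : Algebra k B :=
  RingHom.toAlgebra ((algebraMap A B).comp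
    ((algebraMap (MvPolynomial (Fin n) k) A).comp
      (algebraMap k (MvPolynomial (Fin n) k))))

section Aux

variable (k : Type*) [Field k] (n r : ℕ)

/-- The substitution `ψ : xᵢ ↦ xᵢ·f` for `i < r`. -/
noncomputable def auxPsi (f : MvPolynomial (Fin n) k) :
    MvPolynomial (Fin n) k →+* MvPolynomial (Fin n) k :=
  eval₂Hom C (fun j : Fin n => if (j : ℕ) < r then X j * f else X j)

/-- The map `Φ : xᵢ ↦ xᵢ/f` for `i < r`, into the fraction field. -/
noncomputable def auxPhi (f : MvPolynomial (Fin n) k) :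
    MvPolynomial (Fin n) k →+* FractionRing (MvPolynomial (Fin n) k) :=
  eval₂Hom ((toFrac k n).comp C)
    (fun j : Fin n => if (j : ℕ) < r then toFrac k n (X j) * (toFrac k n f)⁻¹ else toFrac k n (X j))

theorem toFrac_injective : Function.Injective (toFrac k n) :=
  IsFractionRing.injective _ _

theorem toFrac_ne_zero (f : MvPolynomial (Fin n) k) (hf : f ≠ 0) : toFrac k n f ≠ 0 := by
  intro h
  exact hf (toFrac_injective k n (by simpa using h))

theorem auxPsi_supported (f p : MvPolynomial (Fin n) k)
    (hp : p ∈ supported k {j : Fin n | r ≤ (j : ℕ)}) : auxPsi k n r f p = p := by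
  refine Algebra.adjoin_induction (fun x hx => ?_) (fun c => ?_) (fun x y _ _ hx hy => ?_)
    (fun x y _ _ hx hy => ?_) hp
  · obtain ⟨j, hj, rfl⟩ := hx
    simp only [auxPsi, eval₂Hom_X']
    rw [if_neg (by simpa using hj)]
  · simp [auxPsi, algebraMap_eq]
  · simp [map_add, hx, hy]
  · simp [map_mul, hx, hy]

theorem auxPhi_supported (f p : MvPolynomial (Fin n) k)
    (hp : p ∈ supported k {j : Fin n | r ≤ (j : ℕ)}) : auxPhi k n r f p = toFrac k n p := by
  refine Algebra.adjoin_induction (fun x hx => ?_) (fun c => ?_) (fun x y _ _ hx hy => ?_)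
    (fun x y _ _ hx hy => ?_) hp
  · obtain ⟨j, hj, rfl⟩ := hx
    simp only [auxPhi, eval₂Hom_X']
    rw [if_neg (by simpa using hj)]
  · simp only [algebraMap_eq, auxPhi, eval₂Hom_C, RingHom.coe_comp, Function.comp_apply]
  · simp [map_add, hx, hy]
  · simp [map_mul, hx, hy]

theorem auxPhi_auxPsi (f : MvPolynomial (Fin n) k) (hf : f ≠ 0)
    (hsupp : f ∈ supported k {j : Fin n | r ≤ (j : ℕ)}) :
    (auxPhi k n r f).comp (auxPsi k n r f) = toFrac k n := by
  apply MvPolynomial.ringHom_ext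
  · intro a
    simp only [RingHom.coe_comp, Function.comp_apply, auxPsi, auxPhi, eval₂Hom_C]
  · intro j
    simp only [RingHom.coe_comp, Function.comp_apply, auxPsi, eval₂Hom_X']
    by_cases hj : (j : ℕ) < r
    · rw [if_pos hj, map_mul, auxPhi_supported k n r f f hsupp]
      simp only [auxPhi, eval₂Hom_X', if_pos hj]
      rw [mul_assoc, inv_mul_cancel₀ (toFrac_ne_zero k n f hf), mul_one]
    · rw [if_neg hj]
      simp only [auxPhi, eval₂Hom_X', if_neg hj]

theorem auxPsi_injective (f : MvPolynomial (Fin n) k) (hf : f ≠ 0)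
    (hsupp : f ∈ supported k {j : Fin n | r ≤ (j : ℕ)}) :
    Function.Injective (auxPsi k n r f) := by
  have h := auxPhi_auxPsi k n r f hf hsupp
  intro a b hab
  apply toFrac_injective k n
  rw [← RingHom.congr_fun h a, ← RingHom.congr_fun h b]
  simp only [RingHom.coe_comp, Function.comp_apply, hab]

/-- Extension of `ψ` to the fraction field. -/
noncomputable def auxPsiHat (f : MvPolynomial (Fin n) k) (hf : f ≠ 0)
    (hsupp : f ∈ supported k {j : Fin n | r ≤ (j : ℕ)}) :
    FractionRing (MvPolynomial (Fin n) k) →+* FractionRing (MvPolynomial (Fin n) k) :=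
  IsFractionRing.lift (g := (toFrac k n).comp (auxPsi k n r f))
    ((toFrac_injective k n).comp (auxPsi_injective k n r f hf hsupp))

theorem auxPsiHat_toFrac (f : MvPolynomial (Fin n) k) (hf : f ≠ 0)
    (hsupp : f ∈ supported k {j : Fin n | r ≤ (j : ℕ)}) (p : MvPolynomial (Fin n) k) :
    auxPsiHat k n r f hf hsupp (toFrac k n p) = toFrac k n (auxPsi k n r f p) :=
  IsFractionRing.lift_algebraMap _ _

theorem auxPsiHat_auxPhi (f : MvPolynomial (Fin n) k) (hf : f ≠ 0)
    (hsupp : f ∈ supported k {j : Fin n | r ≤ (j : ℕ)}) (p : MvPolynomial (Fin n) k) :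
    auxPsiHat k n r f hf hsupp (auxPhi k n r f p) = toFrac k n p := by
  have key : ((auxPsiHat k n r f hf hsupp).comp (auxPhi k n r f)) = toFrac k n := by
    apply MvPolynomial.ringHom_ext
    · intro a
      simp only [RingHom.coe_comp, Function.comp_apply, auxPhi, eval₂Hom_C]
      rw [auxPsiHat_toFrac]
      rw [show auxPsi k n r f (C a) = C a by simp [auxPsi]]
    · intro j
      simp only [RingHom.coe_comp, Function.comp_apply, auxPhi, eval₂Hom_X']
      by_cases hj : (j : ℕ) < r
      · rw [if_pos hj, map_mul, auxPsiHat_toFrac, map_inv₀, auxPsiHat_toFrac,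
          auxPsi_supported k n r f f hsupp]
        rw [show auxPsi k n r f (X j) = X j * f by simp [auxPsi, if_pos hj]]
        rw [map_mul, mul_assoc, mul_inv_cancel₀ (toFrac_ne_zero k n f hf), mul_one]
      · rw [if_neg hj, auxPsiHat_toFrac]
        rw [show auxPsi k n r f (X j) = X j by simp [auxPsi, if_neg hj]]
  exact RingHom.congr_fun key p

theorem auxPhi_injective (f : MvPolynomial (Fin n) k) (hf : f ≠ 0)
    (hsupp : f ∈ supported k {j : Fin n | r ≤ (j : ℕ)}) :
    Function.Injective (auxPhi k n r f) := by
  intro a b hab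
  apply toFrac_injective k n
  rw [← auxPsiHat_auxPhi k n r f hf hsupp a, ← auxPsiHat_auxPhi k n r f hf hsupp b, hab]

end Aux
/-- Let `1 ≤ r < n`, let `f ∈ k[x₁,…,xₙ]` be a nonzero polynomial in the variables
`x_{r+1},…,xₙ` only, and for `i ≤ r` let `fᵢ = f(x_{r+1},…,x_{n−1}, xₙ + xᵢ)`.  Let
`A = R[1/g] ⊆ K` for a nonzero `g`, and assume each `gᵢ = (fᵢ − f)/xᵢ` is a unit in `A`.
Then the `A`-subalgebra `A[f₁/f, …, f_r/f]` of `K` is isomorphic, as a `k`-algebra,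
to a localization of `k[y₁,…,yₙ]` at a single element.  (The first plain chart of the
blowup along `Z`.) -/
theorem stmt_13 (k : Type*) [Field k] (n r : ℕ) (hr : 1 ≤ r) (hrn : r < n)
    (f : MvPolynomial (Fin n) k) (hf : f ≠ 0)
    (hsupp : f ∈ supported k {j : Fin n | r ≤ (j : ℕ)})
    (g : MvPolynomial (Fin n) k) (hg : g ≠ 0)
    (A : Subalgebra (MvPolynomial (Fin n) k) (FractionRing (MvPolynomial (Fin n) k)))
    (hA : A = Algebra.adjoin (MvPolynomial (Fin n) k) {(toFrac k n g)⁻¹})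
    (hunit : ∀ i : Fin n, (i : ℕ) < r →
      ∃ gi : MvPolynomial (Fin n) k, substLast k n i f - f = X i * gi ∧
        ∃ u ∈ A, toFrac k n gi * u = 1)
    (B : Subalgebra A (FractionRing (MvPolynomial (Fin n) k)))
    (hB : B = Algebra.adjoin A
      {z : FractionRing (MvPolynomial (Fin n) k) | ∃ i : Fin n, (i : ℕ) < r ∧
        z = toFrac k n (substLast k n i f) / toFrac k n f}) :
    ∃ G : MvPolynomial (Fin n) k,
      Nonempty (@AlgEquiv k B (Localization.Away G) _ _ _ (algebraGen k n A B) _) := by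
  classical
  set ι := toFrac k n with hι
  set Φ := auxPhi k n r f with hΦ
  set ψ := auxPsi k n r f with hψ
  have hΦψ : ∀ p, Φ (ψ p) = ι p := fun p =>
    RingHom.congr_fun (auxPhi_auxPsi k n r f hf hsupp) p
  have hΦinj := auxPhi_injective k n r f hf hsupp
  have hιf : ι f ≠ 0 := toFrac_ne_zero k n f hf
  have hιg : ι g ≠ 0 := toFrac_ne_zero k n g hg
  refine ⟨ψ g, ?_⟩
  set G := ψ g with hG
  have hΦG : Φ G = ι g := hΦψ g
  have hGu : IsUnit (Φ G) := by rw [hΦG]; exact isUnit_iff_ne_zero.2 hιg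
  set L := Localization.Away G with hL
  set Λ : L →+* FractionRing (MvPolynomial (Fin n) k) := IsLocalization.Away.lift G hGu with hΛ
  have hΛa : ∀ p, Λ (algebraMap (MvPolynomial (Fin n) k) L p) = Φ p := fun p => IsLocalization.Away.lift_eq G hGu p
  have hAB : ∀ x : FractionRing (MvPolynomial (Fin n) k), x ∈ A → x ∈ B := fun x hx => B.algebraMap_mem ⟨x, hx⟩
  have hιmem : ∀ p, ι p ∈ B := fun p => hAB _ (A.algebraMap_mem p)
  have hginv : (ι g)⁻¹ ∈ B := hAB _ (hA ▸ Algebra.subset_adjoin rfl)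
  have hΦXlt : ∀ j : Fin n, (j : ℕ) < r → Φ (X j) = ι (X j) * (ι f)⁻¹ := by
    intro j hj
    rw [hΦ]
    simp only [auxPhi, eval₂Hom_X', if_pos hj]
    rfl
  have hΦXge : ∀ j : Fin n, ¬ (j : ℕ) < r → Φ (X j) = ι (X j) := by
    intro j hj
    rw [hΦ]
    simp only [auxPhi, eval₂Hom_X', if_neg hj]
    rfl
  have hfi : ∀ (j : Fin n) (gi : (MvPolynomial (Fin n) k)), substLast k n j f - f = X j * gi →
      ι (substLast k n j f) = ι f + ι (X j) * ι gi := by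
    intro j gi hgi
    have h1 : (substLast k n j f : (MvPolynomial (Fin n) k)) = f + X j * gi := by
      rw [← hgi]; ring
    rw [h1, map_add, map_mul]
  have hΦX : ∀ j : Fin n, Φ (X j) ∈ B := by
    intro j
    by_cases hj : (j : ℕ) < r
    · obtain ⟨gi, hgi, u, huA, hu⟩ := hunit j hj
      have hzB : ι (substLast k n j f) / ι f ∈ B := hB ▸ Algebra.subset_adjoin ⟨j, hj, rfl⟩
      have key : Φ (X j) = (ι (substLast k n j f) / ι f - 1) * u := by
        rw [hΦXlt j hj, hfi j gi hgi]
        field_simp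
        linear_combination (-(ι (X j))) * hu
      rw [key]
      exact mul_mem (sub_mem hzB (one_mem B)) (hAB u huA)
    · rw [hΦXge j hj]
      exact hιmem _
  have hΦmem : ∀ p, Φ p ∈ B := by
    intro p
    induction p using MvPolynomial.induction_on with
    | C a =>
      have h1 : Φ (C a) = ι (C a) := by rw [hΦ]; simp only [auxPhi, eval₂Hom_C]; rfl
      rw [h1]; exact hιmem _
    | add p q hp hq => rw [map_add]; exact add_mem hp hq
    | mul_X p j hp => rw [map_mul]; exact mul_mem hp (hΦX j)
  have hmem : ∀ z : L, Λ z ∈ B := by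
    intro z
    obtain ⟨⟨p, s⟩, rfl⟩ := IsLocalization.mk'_surjective (Submonoid.powers G) z
    obtain ⟨m, hm⟩ := s.2
    have h2 := congrArg Λ (IsLocalization.mk'_spec L p s)
    rw [map_mul, hΛa, hΛa] at h2
    have hs : Φ (s : (MvPolynomial (Fin n) k)) = (ι g) ^ m := by rw [← hm, map_pow, hΦG]
    have h3 : Λ (IsLocalization.mk' L p s) = Φ p * ((ι g) ^ m)⁻¹ := by
      rw [eq_mul_inv_iff_mul_eq₀ (pow_ne_zero m hιg), ← hs]
      exact h2
    rw [h3, ← inv_pow]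
    exact mul_mem (hΦmem p) (pow_mem hginv m)
  have hΛinj : Function.Injective Λ := by
    rw [injective_iff_map_eq_zero]
    intro z hz
    obtain ⟨⟨p, s⟩, rfl⟩ := IsLocalization.mk'_surjective (Submonoid.powers G) z
    have h2 := congrArg Λ (IsLocalization.mk'_spec L p s)
    rw [map_mul, hΛa, hΛa, hz, zero_mul] at h2
    have hp : p = 0 := hΦinj (by rw [map_zero, ← h2])
    rw [hp]
    exact IsLocalization.mk'_zero _
  have hsurj : ∀ x : FractionRing (MvPolynomial (Fin n) k), x ∈ B → ∃ z : L, Λ z = x := by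
    intro x hx
    have hx' : x ∈ Algebra.adjoin A
        {z : FractionRing (MvPolynomial (Fin n) k) | ∃ i : Fin n, (i : ℕ) < r ∧ z = ι (substLast k n i f) / ι f} := hB ▸ hx
    refine Algebra.adjoin_induction ?_ ?_ ?_ ?_ hx'
    · rintro z ⟨i, hi, rfl⟩
      obtain ⟨gi, hgi, u, huA, hu⟩ := hunit i hi
      refine ⟨algebraMap (MvPolynomial (Fin n) k) L (1 + X i * ψ gi), ?_⟩
      rw [hΛa, map_add, map_one, map_mul, hΦψ, hΦXlt i hi, hfi i gi hgi]
      field_simp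
    · rintro ⟨a, ha⟩
      have ha' : a ∈ Algebra.adjoin (MvPolynomial (Fin n) k) {(toFrac k n g)⁻¹} := hA ▸ ha
      show ∃ z : L, Λ z = a
      refine Algebra.adjoin_induction ?_ ?_ ?_ ?_ ha'
      · rintro z (rfl : z = (toFrac k n g)⁻¹)
        refine ⟨IsLocalization.mk' L (1 : (MvPolynomial (Fin n) k)) ⟨G, Submonoid.mem_powers G⟩, ?_⟩
        have h2 := congrArg Λ (IsLocalization.mk'_spec L (1 : (MvPolynomial (Fin n) k)) ⟨G, Submonoid.mem_powers G⟩)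
        rw [map_mul, hΛa, hΛa, map_one, hΦG] at h2
        show Λ _ = (ι g)⁻¹
        rw [inv_eq_one_div, eq_div_iff hιg]
        exact h2
      · intro p
        exact ⟨algebraMap (MvPolynomial (Fin n) k) L (ψ p), by rw [hΛa, hΦψ]; rfl⟩
      · rintro x y _ _ ⟨zx, rfl⟩ ⟨zy, rfl⟩
        exact ⟨zx + zy, map_add Λ _ _⟩
      · rintro x y _ _ ⟨zx, rfl⟩ ⟨zy, rfl⟩
        exact ⟨zx * zy, map_mul Λ _ _⟩
    · rintro x y _ _ ⟨zx, rfl⟩ ⟨zy, rfl⟩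
      exact ⟨zx + zy, map_add Λ _ _⟩
    · rintro x y _ _ ⟨zx, rfl⟩ ⟨zy, rfl⟩
      exact ⟨zx * zy, map_mul Λ _ _⟩
  letI : Algebra k B := algebraGen k n A B
  let e : L →ₐ[k] B := {
    toFun := fun z => ⟨Λ z, hmem z⟩
    map_one' := Subtype.ext (map_one Λ)
    map_mul' := fun x y => Subtype.ext (map_mul Λ x y)
    map_zero' := Subtype.ext (map_zero Λ)
    map_add' := fun x y => Subtype.ext (map_add Λ x y)
    commutes' := fun c => Subtype.ext (by
      show Λ (algebraMap k L c) = _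
      have h1 : algebraMap k L c = algebraMap (MvPolynomial (Fin n) k) L (C c) := rfl
      rw [h1, hΛa]
      have h2 : Φ (C c) = ι (C c) := by rw [hΦ]; simp only [auxPhi, eval₂Hom_C]; rfl
      rw [h2]
      rfl) }
  have hbij : Function.Bijective e := by
    constructor
    · intro x y hxy
      exact hΛinj (congrArg Subtype.val hxy)
    · rintro ⟨b, hb⟩
      obtain ⟨z, hz⟩ := hsurj b hb
      exact ⟨z, Subtype.ext hz⟩
  exact ⟨(AlgEquiv.ofBijective e hbij).symm⟩
end

section
/- Let k be a field and let u, v ∈ k with u²v² + 1 ≠ 0. Set x = u²v/(u²v² + 1), y = v, and z = u/(u²v² + 1). Then x = (x² + z²)·y (so the point (x,y,z) lies on the surface S : x = (x² + z²)y), 1 − x·y ≠ 0, and z/(1 − x·y) = u. (The map (u,v) ↦ (u²v/(u²v²+1), v, u/(u²v²+1)) maps the complement of u²v²+1 = 0 into S off the locus 1 − xy = 0, and (x,y,z) ↦ (z/(1−xy), y) is a left inverse.) -/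
/-- The map `(u,v) ↦ (u²v/(u²v²+1), v, u/(u²v²+1))` maps the complement of
`u²v² + 1 = 0` into the surface `S : x = (x² + z²)y` away from the locus `1 − xy = 0`,
and `(x,y,z) ↦ (z/(1−xy), y)` is a left inverse. -/
theorem stmt_16 (k : Type*) [Field k] (u v : k) (h : u ^ 2 * v ^ 2 + 1 ≠ 0)
    (x y z : k) (hx : x = u ^ 2 * v / (u ^ 2 * v ^ 2 + 1)) (hy : y = v)
    (hz : z = u / (u ^ 2 * v ^ 2 + 1)) :
    x = (x ^ 2 + z ^ 2) * y ∧ 1 - x * y ≠ 0 ∧ z / (1 - x * y) = u := by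
  subst hx hy hz
  have h1 : 1 - u ^ 2 * y / (u ^ 2 * y ^ 2 + 1) * y ≠ 0 := by
    have : 1 - u ^ 2 * y / (u ^ 2 * y ^ 2 + 1) * y = 1 / (u ^ 2 * y ^ 2 + 1) := by
      field_simp; ring
    rw [this]
    simp [h]
  refine ⟨by field_simp, h1, ?_⟩
  rw [div_eq_iff h1]
  field_simp
  ring
end

section
/- Let k be a field and let x, y, z ∈ k with x = (x² + z²)·y and 1 − x·y ≠ 0. Set u = z/(1 − x·y) and v = y. Then u²v² + 1 ≠ 0, u²v/(u²v² + 1) = x, and u/(u²v² + 1) = z. (The map (x,y,z) ↦ (z/(1−xy), y) from the surface S : x = (x²+z²)y, restricted to the locus 1 − xy ≠ 0, has the map (u,v) ↦ (u²v/(u²v²+1), v, u/(u²v²+1)) as a two-sided inverse; hence this locus of S is a plain chart.) -/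
/-- On the surface `S : x = (x² + z²)y`, restricted to the locus `1 − xy ≠ 0`,
the map `(x,y,z) ↦ (z/(1−xy), y)` has `(u,v) ↦ (u²v/(u²v²+1), v, u/(u²v²+1))`
as a two-sided inverse. -/
theorem stmt_17 (k : Type*) [Field k] (x y z : k) (hS : x = (x ^ 2 + z ^ 2) * y)
    (h : 1 - x * y ≠ 0) (u v : k) (hu : u = z / (1 - x * y)) (hv : v = y) :
    u ^ 2 * v ^ 2 + 1 ≠ 0 ∧ u ^ 2 * v / (u ^ 2 * v ^ 2 + 1) = x ∧
      u / (u ^ 2 * v ^ 2 + 1) = z := by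
  subst hu hv
  have key : (z / (1 - x * v)) ^ 2 * v ^ 2 + 1 = (1 - x * v)⁻¹ := by
    rw [inv_eq_one_div]
    field_simp
    ring_nf
    linear_combination (-v) * hS
  have hinv : (1 - x * v)⁻¹ ≠ 0 := inv_ne_zero h
  refine ⟨by rw [key]; exact hinv, ?_, ?_⟩
  · rw [key, div_eq_iff hinv]
    field_simp
    linear_combination (-1) * hS
  · rw [key, div_eq_iff hinv]
    field_simp
end
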